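/- For every r ≥ 2, an r-pattern P (a 2-edge ordered r-matching, encoded as a word over {A,B} of length 2r with r occurrences of each letter, starting with A) is collectable if and only if P can be written as a concatenation of blocks each of the form A^t B^t or B^t A^t for various t ≥ 1. Consequently, the number of collectable r-patterns is 3^{r−1}. -/

import Mathlib

/-- The word over `{A,B}` (encoded `false` = `A`, `true` = `B`) formed by two disjoint
edges `e` (the `A`-edge) and `f` (the `B`-edge) in a linear order: list the vertices of
`e ∪ f` in increasing order and record which edge each belongs to. -/
def pairWord {α : Type*} [LinearOrder α] (e f : Finset α) : List Bool :=
  ((e ∪ f).sort (· ≤ ·)).map fun v => decide (v ∈ f)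

/-- Two edges `e, f` form (as an unordered pair) the pattern `P`. -/
def FormsPattern {α : Type*} [LinearOrder α] (P : List Bool) (e f : Finset α) : Prop :=
  pairWord e f = P ∨ pairWord f e = P

/-- An `r`-pattern: a word of length `2r` over `{A,B}` with `r` occurrences of each
letter, starting with `A` (= `false`). -/
def IsPattern (r : ℕ) (P : List Bool) : Prop :=
  P.length = 2 * r ∧ P.count true = r ∧ P.head? = some false

/-- `P` is collectable: for every `k` there is an ordered `r`-matching of size `k`
(a `P`-clique) in which every pair of edges forms the pattern `P`. -/
def Collectable (r : ℕ) (P : List Bool) : Prop :=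
  ∀ k : ℕ, ∃ M : Finset (Finset ℕ), M.card = k ∧ (∀ e ∈ M, e.card = r) ∧
    (∀ e ∈ M, ∀ f ∈ M, e ≠ f → Disjoint e f) ∧
    (∀ e ∈ M, ∀ f ∈ M, e ≠ f → FormsPattern P e f)

/-- The word obtained by concatenating blocks `A^t B^t` (when the Boolean is `false`) or
`B^t A^t` (when it is `true`). -/
def wordOfBlocks (blocks : List (ℕ × Bool)) : List Bool :=
  blocks.flatMap fun b => List.replicate b.1 b.2 ++ List.replicate b.1 (!b.2)

/-- `P` splits into consecutive blocks of the form `A^t B^t` or `B^t A^t`. -/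
def HasBlockSplitting (r : ℕ) (P : List Bool) : Prop :=
  ∃ blocks : List (ℕ × Bool), (∀ b ∈ blocks, 0 < b.1) ∧
    (blocks.map Prod.fst).sum = r ∧ P = wordOfBlocks blocks

/-! ### Merge machinery -/

/-- Merge two lists (intended: sorted). -/
def ml : List ℕ → List ℕ → List ℕ
  | [], ys => ys
  | x :: xs, [] => x :: ml xs []
  | x :: xs, y :: ys => if x < y then x :: ml xs (y :: ys) else y :: ml (x :: xs) ys
termination_by a b => a.length + b.length

/-- The merge word of two lists: `false` for elements of the first. -/
def mw : List ℕ → List ℕ → List Bool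
  | [], ys => List.replicate ys.length true
  | _ :: xs, [] => false :: mw xs []
  | x :: xs, y :: ys =>
      if x < y then false :: mw xs (y :: ys) else true :: mw (x :: xs) ys
termination_by a b => a.length + b.length

@[simp] lemma ml_nil_left (ys : List ℕ) : ml [] ys = ys := by rw [ml]

@[simp] lemma ml_nil_right : ∀ xs : List ℕ, ml xs [] = xs
  | [] => by rw [ml]
  | x :: xs => by rw [ml, ml_nil_right]

@[simp] lemma mw_nil_left (ys : List ℕ) : mw [] ys = List.replicate ys.length true := by rw [mw]

@[simp] lemma mw_nil_right : ∀ xs : List ℕ, mw xs [] = List.replicate xs.length false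
  | [] => by rw [mw]; rfl
  | x :: xs => by rw [mw, mw_nil_right]; rfl

lemma ml_cons_cons (x y : ℕ) (xs ys : List ℕ) :
    ml (x :: xs) (y :: ys) = if x < y then x :: ml xs (y :: ys) else y :: ml (x :: xs) ys := by
  rw [ml]

lemma mw_cons_cons (x y : ℕ) (xs ys : List ℕ) :
    mw (x :: xs) (y :: ys) = if x < y then false :: mw xs (y :: ys) else true :: mw (x :: xs) ys := by
  rw [mw]

lemma ml_perm : ∀ xs ys : List ℕ, (ml xs ys).Perm (xs ++ ys)
  | [], ys => by simp
  | x :: xs, [] => by simp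
  | x :: xs, y :: ys => by
      rw [ml_cons_cons]
      split
      · exact (ml_perm xs (y :: ys)).cons x
      · exact ((ml_perm (x :: xs) ys).cons y).trans List.perm_middle.symm
termination_by a b => a.length + b.length

lemma ml_mem {a : ℕ} {xs ys : List ℕ} : a ∈ ml xs ys ↔ a ∈ xs ∨ a ∈ ys := by
  rw [(ml_perm xs ys).mem_iff, List.mem_append]

lemma ml_length (xs ys : List ℕ) : (ml xs ys).length = xs.length + ys.length := by
  simpa using (ml_perm xs ys).length_eq

lemma mw_length : ∀ xs ys : List ℕ, (mw xs ys).length = xs.length + ys.length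
  | [], ys => by simp
  | x :: xs, [] => by simp
  | x :: xs, y :: ys => by
      rw [mw_cons_cons]
      split
      · rw [List.length_cons, mw_length xs (y :: ys)]; simp; omega
      · rw [List.length_cons, mw_length (x :: xs) ys]; simp; omega
termination_by a b => a.length + b.length

lemma ml_sorted : ∀ {xs ys : List ℕ}, xs.Pairwise (· < ·) → ys.Pairwise (· < ·) →
    (∀ a ∈ xs, a ∉ ys) → (ml xs ys).Pairwise (· < ·)
  | [], ys, _, hy, _ => by simpa using hy
  | x :: xs, [], hx, _, _ => by simpa using hx
  | x :: xs, y :: ys, hx, hy, hd => by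
      rw [ml_cons_cons]
      rw [List.pairwise_cons] at hx hy
      split
      · rename_i hxy
        refine List.pairwise_cons.2 ⟨?_, ml_sorted hx.2 (List.pairwise_cons.2 hy)
          (fun a ha => hd a (List.mem_cons_of_mem _ ha))⟩
        intro b hb
        rcases ml_mem.1 hb with h | h
        · exact hx.1 b h
        · rcases List.mem_cons.1 h with rfl | h
          · exact hxy
          · exact lt_trans hxy (hy.1 b h)
      · rename_i hxy
        have hne : y ≠ x := by
          intro he
          exact hd x (List.mem_cons_self) (he ▸ List.mem_cons_self)
        have hyx : y < x := lt_of_le_of_ne (not_lt.1 hxy) hne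
        refine List.pairwise_cons.2 ⟨?_, ml_sorted (List.pairwise_cons.2 hx) hy.2
          (fun a ha hay => hd a ha (List.mem_cons_of_mem _ hay))⟩
        intro b hb
        rcases ml_mem.1 hb with h | h
        · rcases List.mem_cons.1 h with rfl | h
          · exact hyx
          · exact lt_trans hyx (hx.1 b h)
        · exact hy.1 b h
termination_by a b => a.length + b.length

lemma ml_map {p : ℕ → Bool} : ∀ {xs ys : List ℕ}, (∀ a ∈ xs, p a = false) →
    (∀ a ∈ ys, p a = true) → (ml xs ys).map p = mw xs ys
  | [], ys, _, hy => by
      simp only [ml_nil_left, mw_nil_left]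
      exact List.eq_replicate_iff.2 ⟨by simp, by simpa using hy⟩
  | x :: xs, [], hx, _ => by
      simp only [ml_nil_right, mw_nil_right]
      exact List.eq_replicate_iff.2 ⟨by simp, by simpa using hx⟩
  | x :: xs, y :: ys, hx, hy => by
      rw [ml_cons_cons, mw_cons_cons]
      split
      · rw [List.map_cons, hx x (List.mem_cons_self),
          ml_map (fun a ha => hx a (List.mem_cons_of_mem _ ha)) hy]
      · rw [List.map_cons, hy y (List.mem_cons_self),
          ml_map hx (fun a ha => hy a (List.mem_cons_of_mem _ ha))]
termination_by a b => a.length + b.length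

/-! ### fb: counting falses before the j-th true -/

/-- number of `false`s before the `j`-th (0-indexed) `true` in `w`
(all falses if there is no `j`-th true). -/
def fb : List Bool → ℕ → ℕ
  | [], _ => 0
  | false :: w, j => fb w j + 1
  | true :: _, 0 => 0
  | true :: w, j + 1 => fb w j

lemma fb_mono : ∀ (w : List Bool) {j j' : ℕ}, j ≤ j' → fb w j ≤ fb w j'
  | [], _, _, _ => le_rfl
  | false :: w, j, j', h => by rw [fb, fb]; exact Nat.succ_le_succ (fb_mono w h)
  | true :: w, 0, j', _ => by rw [fb]; exact Nat.zero_le _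
  | true :: w, j + 1, j' + 1, h => by rw [fb, fb]; exact fb_mono w (Nat.succ_le_succ_iff.1 h)

lemma sorted_head_le {a : ℕ} {l : List ℕ} (h : (a :: l).Pairwise (· < ·)) :
    ∀ (j : ℕ) (hj : j < (a :: l).length), a ≤ (a :: l)[j]
  | 0, _ => le_rfl
  | j + 1, hj => le_of_lt ((List.pairwise_cons.1 h).1 _ (List.getElem_mem _))

lemma mw_lt_iff : ∀ (xs ys : List ℕ), xs.Pairwise (· < ·) → ys.Pairwise (· < ·) →
    (∀ a ∈ xs, a ∉ ys) → ∀ (i j : ℕ) (hi : i < xs.length) (hj : j < ys.length),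
    (xs[i] < ys[j] ↔ i < fb (mw xs ys) j)
  | [], ys, _, _, _ => by intro i j hi hj; exact absurd hi (by simp)
  | x :: xs, [], _, _, _ => by intro i j hi hj; exact absurd hj (by simp)
  | x :: xs, y :: ys, hx, hy, hd => by
      intro i j hi hj
      rw [mw_cons_cons]
      split
      · rename_i hxy
        rw [show fb (false :: mw xs (y :: ys)) j = fb (mw xs (y :: ys)) j + 1 from rfl]
        match i, hi with
        | 0, _ =>
            simp only [List.getElem_cons_zero]
            constructor
            · intro _; omega
            · intro _; exact lt_of_lt_of_le hxy (sorted_head_le hy j hj)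
        | i + 1, hi =>
            simp only [List.getElem_cons_succ]
            rw [mw_lt_iff xs (y :: ys) (List.pairwise_cons.1 hx).2 hy
              (fun a ha => hd a (List.mem_cons_of_mem _ ha)) i j (by simpa using hi) hj]
            omega
      · rename_i hxy
        have hne : y ≠ x := fun he => hd x (List.mem_cons_self) (he ▸ List.mem_cons_self)
        have hyx : y < x := lt_of_le_of_ne (not_lt.1 hxy) hne
        match j, hj with
        | 0, _ =>
            rw [show fb (true :: mw (x :: xs) ys) 0 = 0 from rfl]
            simp only [List.getElem_cons_zero]
            constructor
            · intro hc
              exact absurd (lt_trans hyx (lt_of_le_of_lt (sorted_head_le hx i hi) hc))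
                (lt_irrefl y)
            · intro hc; omega
        | j + 1, hj =>
            rw [show fb (true :: mw (x :: xs) ys) (j + 1) = fb (mw (x :: xs) ys) j from rfl]
            simp only [List.getElem_cons_succ]
            exact mw_lt_iff (x :: xs) ys hx (List.pairwise_cons.1 hy).2
              (fun a ha hay => hd a ha (List.mem_cons_of_mem _ hay)) i j hi (by simpa using hj)
termination_by xs ys => xs.length + ys.length

/-! ### mw on blocks -/

lemma mw_append : ∀ (x1 y1 x2 y2 : List ℕ),
    (∀ a ∈ x1 ++ y1, ∀ b ∈ x2 ++ y2, a < b) →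
    mw (x1 ++ x2) (y1 ++ y2) = mw x1 y1 ++ mw x2 y2
  | [], [], x2, y2, _ => by simp
  | [], b :: y1', x2, y2, h => by
      match x2 with
      | [] =>
          simp only [List.nil_append, mw_nil_left, List.length_append, List.length_cons]
          rw [← List.replicate_add]
      | a :: xs2 =>
          have hba : b < a := h b (by simp) a (by simp)
          simp only [List.nil_append, List.cons_append]
          rw [mw_cons_cons, if_neg (by omega)]
          have := mw_append [] y1' (a :: xs2) y2
            (fun c hc d hd => h c (by simp at hc ⊢; tauto) d hd)
          simp only [List.nil_append] at this
          rw [this, mw_nil_left, mw_nil_left]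
          try simp [List.replicate_succ]
  | a :: x1', [], x2, y2, h => by
      match y2 with
      | [] =>
          simp only [List.append_nil, mw_nil_right, List.length_append]
          rw [← List.replicate_add]
      | c :: ys2 =>
          have hac : a < c := h a (by simp) c (by simp)
          simp only [List.append_nil, List.cons_append, List.nil_append]
          rw [mw_cons_cons, if_pos hac]
          have := mw_append x1' [] x2 (c :: ys2)
            (fun d hd e he => h d (by simp at hd ⊢; tauto) e he)
          simp only [List.append_nil, List.nil_append] at this
          rw [this, mw_nil_right, mw_nil_right]
          simp [List.replicate_succ]
  | a :: x1', b :: y1', x2, y2, h => by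
      simp only [List.cons_append]
      rw [mw_cons_cons, mw_cons_cons]
      split
      · have := mw_append x1' (b :: y1') x2 y2
          (fun c hc d hd => h c (by simp at hc ⊢; tauto) d hd)
        simp only [List.cons_append] at this
        rw [this]
        rfl
      · have := mw_append (a :: x1') y1' x2 y2
          (fun c hc d hd => h c (by simp at hc ⊢; tauto) d hd)
        simp only [List.cons_append] at this
        rw [this]
        rfl
termination_by x1 y1 _ _ => x1.length + y1.length

lemma mw_all_lt {x y : List ℕ} (h : ∀ a ∈ x, ∀ b ∈ y, a < b) :
    mw x y = List.replicate x.length false ++ List.replicate y.length true := by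
  have := mw_append x [] [] y (by
    intro a ha b hb
    simp only [List.append_nil, List.nil_append] at ha hb
    exact h a ha b hb)
  simpa using this

lemma mw_all_gt {x y : List ℕ} (h : ∀ b ∈ y, ∀ a ∈ x, b < a) :
    mw x y = List.replicate y.length true ++ List.replicate x.length false := by
  have := mw_append [] y x [] (by
    intro a ha b hb
    simp only [List.append_nil, List.nil_append] at ha hb
    exact h a ha b hb)
  simpa using this

/-! ### pairWord via mw -/

lemma pairWord_eq_of_sorted {e f : Finset ℕ} {s : List ℕ} (hs : s.Pairwise (· < ·))
    (h : s.toFinset = e ∪ f) : pairWord e f = s.map fun v => decide (v ∈ f) := by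
  have h1 : (e ∪ f).sort (· ≤ ·) = s := by
    refine List.Perm.eq_of_pairwise' (Finset.pairwise_sort _ _) (hs.imp le_of_lt) ?_
    refine List.perm_of_nodup_nodup_toFinset_eq (Finset.sort_nodup _ _) hs.nodup ?_
    rw [Finset.sort_toFinset, h]
  rw [pairWord]; rw [h1]

lemma pairWord_toFinset {x y : List ℕ} (hx : x.Pairwise (· < ·)) (hy : y.Pairwise (· < ·))
    (hd : ∀ a ∈ x, a ∉ y) : pairWord x.toFinset y.toFinset = mw x y := by
  have hs := ml_sorted hx hy hd
  have ht : (ml x y).toFinset = x.toFinset ∪ y.toFinset := by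
    ext a
    simp [List.mem_toFinset, ml_mem]
  rw [pairWord_eq_of_sorted hs ht]
  exact ml_map (fun a ha => by simpa using hd a ha) (fun a ha => by simpa using ha)

lemma pairWord_eq_mw_sort {e f : Finset ℕ} (hd : Disjoint e f) :
    pairWord e f = mw (e.sort (· ≤ ·)) (f.sort (· ≤ ·)) := by
  have he : (e.sort (· ≤ ·)).toFinset = e := Finset.sort_toFinset _ _
  have hf : (f.sort (· ≤ ·)).toFinset = f := Finset.sort_toFinset _ _
  rw [← pairWord_toFinset ((Finset.sortedLT_sort e).pairwise) ((Finset.sortedLT_sort f).pairwise)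
    (fun a ha haf => Finset.disjoint_left.1 hd ((Finset.mem_sort _).1 ha) ((Finset.mem_sort _).1 haf))]
  rw [he, hf]

/-! ### Construction of P-cliques from block splittings -/

/-- The sum of block sizes. -/
def sumB (bs : List (ℕ × Bool)) : ℕ := (bs.map Prod.fst).sum

/-- The `i`-th edge (as a sorted list) of the canonical `k`-clique for blocks `bs`,
starting at offset `off`. -/
def eL (k i : ℕ) : List (ℕ × Bool) → ℕ → List ℕ
  | [], _ => []
  | (t, b) :: bs, off =>
      ((List.range t).map fun m => off + (if b then k - 1 - i else i) * t + m)
        ++ eL k i bs (off + k * t)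

@[simp] lemma sumB_nil : sumB [] = 0 := rfl
@[simp] lemma sumB_cons (t : ℕ) (b : Bool) (bs : List (ℕ × Bool)) :
    sumB ((t, b) :: bs) = t + sumB bs := by simp [sumB]

lemma slot_le {k x : ℕ} (hx : x < k) (b : Bool) : (if b then k - 1 - x else x) ≤ k - 1 := by
  split <;> omega

lemma slot_bound {k x t m : ℕ} (hx : x < k) (hm : m < t) (b : Bool) :
    (if b then k - 1 - x else x) * t + m < k * t := by
  have h1 : (if b then k - 1 - x else x) * t ≤ (k - 1) * t :=
    Nat.mul_le_mul_right t (slot_le hx b)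
  have h2 : (k - 1) * t + t = k * t := by
    have hk : k - 1 + 1 = k := by omega
    calc (k - 1) * t + t = (k - 1 + 1) * t := by ring
    _ = k * t := by rw [hk]
  omega

lemma slot_sep {s s' t m m' : ℕ} (hss : s < s') (hm : m < t) :
    s * t + m < s' * t + m' := by
  have h1 : (s + 1) * t ≤ s' * t := Nat.mul_le_mul_right t (by omega)
  have h2 : (s + 1) * t = s * t + t := by ring
  omega

lemma eL_length (k i : ℕ) : ∀ (bs : List (ℕ × Bool)) (off : ℕ),
    (eL k i bs off).length = sumB bs
  | [], _ => rfl
  | (t, b) :: bs, off => by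
      simp [eL, eL_length k i bs]

lemma eL_bound {k i : ℕ} (hi : i < k) : ∀ (bs : List (ℕ × Bool)) (off : ℕ),
    ∀ a ∈ eL k i bs off, off ≤ a ∧ a < off + k * sumB bs
  | [], _ => by simp [eL]
  | (t, b) :: bs, off => by
      intro a ha
      have hmul : k * sumB ((t, b) :: bs) = k * t + k * sumB bs := by
        rw [sumB_cons, Nat.mul_add]
      rw [eL, List.mem_append] at ha
      rcases ha with h | h
      · rw [List.mem_map] at h
        obtain ⟨m, hm, rfl⟩ := h
        rw [List.mem_range] at hm
        have := slot_bound hi hm b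
        omega
      · have := eL_bound hi bs (off + k * t) a h
        omega

lemma eL_sorted {k i : ℕ} (hi : i < k) : ∀ (bs : List (ℕ × Bool)) (off : ℕ),
    (eL k i bs off).Pairwise (· < ·)
  | [], _ => by simp [eL]
  | (t, b) :: bs, off => by
      rw [eL, List.pairwise_append]
      refine ⟨?_, eL_sorted hi bs _, ?_⟩
      · refine List.pairwise_iff_getElem.2 ?_
        intro a c ha hc hac
        simp only [List.getElem_map, List.getElem_range]
        omega
      · intro a ha c hc
        rw [List.mem_map] at ha
        obtain ⟨m, hm, rfl⟩ := ha
        rw [List.mem_range] at hm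
        have h1 := slot_bound hi hm b
        have h2 := (eL_bound hi bs (off + k * t) c hc).1
        omega

lemma eL_disj {k i j : ℕ} (hi : i < k) (hj : j < k) (hij : i ≠ j) :
    ∀ (bs : List (ℕ × Bool)) (off : ℕ), ∀ a ∈ eL k i bs off, a ∉ eL k j bs off
  | [], _ => by simp [eL]
  | (t, b) :: bs, off => by
      intro a ha hc
      rw [eL, List.mem_append] at ha hc
      have hsne : (if b then k - 1 - i else i) ≠ (if b then k - 1 - j else j) := by
        split <;> omega
      rcases ha with h | h <;> rcases hc with h' | h'
      · rw [List.mem_map] at h h'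
        obtain ⟨m, hm, he⟩ := h
        obtain ⟨m', hm', he'⟩ := h'
        rw [List.mem_range] at hm hm'
        rw [← he'] at he
        rcases Nat.lt_or_ge (if b then k - 1 - i else i) (if b then k - 1 - j else j)
            with hlt | hge
        · have := slot_sep hlt hm (m' := m')
          omega
        · have hgt : (if b then k - 1 - j else j) < (if b then k - 1 - i else i) := by omega
          have := slot_sep hgt hm' (m' := m)
          omega
      · rw [List.mem_map] at h
        obtain ⟨m, hm, rfl⟩ := h
        rw [List.mem_range] at hm
        have h1 := slot_bound hi hm b
        have h2 := (eL_bound hj bs (off + k * t) _ h').1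
        omega
      · rw [List.mem_map] at h'
        obtain ⟨m, hm, he⟩ := h'
        rw [List.mem_range] at hm
        have h1 := slot_bound hj hm b
        have h2 := (eL_bound hi bs (off + k * t) _ h).1
        omega
      · exact eL_disj hi hj hij bs (off + k * t) a h h'

lemma mw_eL {k i j : ℕ} (hij : i < j) (hj : j < k) :
    ∀ (bs : List (ℕ × Bool)) (off : ℕ),
    mw (eL k i bs off) (eL k j bs off) = wordOfBlocks bs
  | [], _ => by simp [eL, wordOfBlocks]
  | (t, b) :: bs, off => by
      have hi : i < k := lt_trans hij hj
      rw [eL, eL]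
      rw [mw_append _ _ _ _ ?_]
      · have hbl : wordOfBlocks ((t, b) :: bs)
            = (List.replicate t b ++ List.replicate t (!b)) ++ wordOfBlocks bs := by
          simp [wordOfBlocks]
        rw [hbl, mw_eL hij hj bs (off + k * t)]
        congr 1
        cases b
        · rw [mw_all_lt ?_]
          · simp
          · intro a ha c hc
            simp only [List.mem_map, List.mem_range] at ha hc
            obtain ⟨m, hm, rfl⟩ := ha
            obtain ⟨m', hm', rfl⟩ := hc
            have hifi : (if false = true then k - 1 - i else i) = i := if_neg Bool.false_ne_true
            have hifj : (if false = true then k - 1 - j else j) = j := if_neg Bool.false_ne_true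
            rw [hifi, hifj]
            have := slot_sep hij hm (m' := m')
            omega
        · rw [mw_all_gt ?_]
          · simp
          · intro c hc a ha
            simp only [List.mem_map, List.mem_range] at ha hc
            obtain ⟨m, hm, rfl⟩ := ha
            obtain ⟨m', hm', rfl⟩ := hc
            have hifi : (if True then k - 1 - i else i) = k - 1 - i := if_pos trivial
            have hifj : (if True then k - 1 - j else j) = k - 1 - j := if_pos trivial
            rw [hifi, hifj]
            have hlt : k - 1 - j < k - 1 - i := by omega
            have := slot_sep hlt hm' (m' := m)
            omega
      · intro a ha c hc
        rw [List.mem_append] at ha hc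
        have hs1 : ∀ (x : ℕ), x < k → ∀ a ∈ (List.range t).map
            (fun m => off + (if b then k - 1 - x else x) * t + m), a < off + k * t := by
          intro x hx a ha
          rw [List.mem_map] at ha
          obtain ⟨m, hm, rfl⟩ := ha
          rw [List.mem_range] at hm
          have := slot_bound hx hm b
          omega
        have ha' : a < off + k * t := by
          rcases ha with h | h
          · exact hs1 i hi a h
          · exact hs1 j hj a h
        have hc' : off + k * t ≤ c := by
          rcases hc with h | h
          · exact (eL_bound hi bs (off + k * t) c h).1
          · exact (eL_bound hj bs (off + k * t) c h).1
        omega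

theorem collectable_of_hbs {r : ℕ} {P : List Bool} (hr : 0 < r) (h : HasBlockSplitting r P) :
    Collectable r P := by
  obtain ⟨bs, hpos, hsum, hP⟩ := h
  have hsum' : sumB bs = r := by simpa [sumB] using hsum
  intro k
  refine ⟨(Finset.range k).image fun i => (eL k i bs 0).toFinset, ?_, ?_, ?_, ?_⟩
  · rw [Finset.card_image_of_injOn, Finset.card_range]
    intro i hi j hj hij
    by_contra hne
    have hik : i < k := Finset.mem_range.1 hi
    have hjk : j < k := Finset.mem_range.1 hj
    have hlen : 0 < (eL k i bs 0).length := by rw [eL_length]; omega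
    obtain ⟨a, ha⟩ := List.exists_mem_of_length_pos hlen
    have h1 : a ∈ (eL k i bs 0).toFinset := List.mem_toFinset.2 ha
    have h2 : a ∉ (eL k j bs 0).toFinset := fun hc =>
      eL_disj hik hjk hne bs 0 a ha (List.mem_toFinset.1 hc)
    simp only at hij
    exact h2 (hij ▸ h1)
  · intro e he
    rw [Finset.mem_image] at he
    obtain ⟨i, hi, rfl⟩ := he
    rw [List.toFinset_card_of_nodup ((eL_sorted (Finset.mem_range.1 hi) bs 0).nodup),
      eL_length, hsum']
  · intro e he f hf hef
    rw [Finset.mem_image] at he hf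
    obtain ⟨i, hi, rfl⟩ := he
    obtain ⟨j, hj, rfl⟩ := hf
    have hij : i ≠ j := fun hc => hef (by rw [hc])
    rw [Finset.disjoint_left]
    intro a ha hb
    exact eL_disj (Finset.mem_range.1 hi) (Finset.mem_range.1 hj) hij bs 0 a
      (List.mem_toFinset.1 ha) (List.mem_toFinset.1 hb)
  · intro e he f hf hef
    rw [Finset.mem_image] at he hf
    obtain ⟨i, hi, rfl⟩ := he
    obtain ⟨j, hj, rfl⟩ := hf
    have hik := Finset.mem_range.1 hi
    have hjk := Finset.mem_range.1 hj
    have hij : i ≠ j := fun hc => hef (by rw [hc])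
    have key : ∀ i' j', i' < j' → j' < k →
        pairWord (eL k i' bs 0).toFinset (eL k j' bs 0).toFinset = P := by
      intro i' j' h1 h2
      rw [pairWord_toFinset (eL_sorted (lt_trans h1 h2) bs 0) (eL_sorted h2 bs 0)
        (eL_disj (lt_trans h1 h2) h2 (Nat.ne_of_lt h1) bs 0), mw_eL h1 h2, hP]
    rcases lt_or_gt_of_ne hij with hlt | hgt
    · exact Or.inl (key i j hlt hjk)
    · exact Or.inr (key j i hgt hik)

/-! ### Abstract block decomposition -/

/-- Structural properties of a block decomposition w.r.t. an abstract relation `R`. -/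
def Q (n : ℕ) (R : ℕ → ℕ → Prop) : List (ℕ × Bool) → ℕ → Prop
  | [], _ => True
  | (t, b) :: bs, u =>
      (∀ i j, u ≤ i → i < u + t → u ≤ j → j < u + t → (R i j ↔ b = false)) ∧
      (∀ i j, u ≤ i → i < u + t → u + t ≤ j → j < n → R i j ∧ ¬ R j i) ∧
      Q n R bs (u + t)

lemma Q_shift (R : ℕ → ℕ → Prop) (t m : ℕ) :
    ∀ (bs : List (ℕ × Bool)) (u : ℕ),
    Q m (fun i j => R (t + i) (t + j)) bs u → Q (m + t) R bs (u + t)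
  | [], u => fun _ => trivial
  | (s, c) :: bs, u => by
      rintro ⟨h1, h2, h3⟩
      refine ⟨?_, ?_, ?_⟩
      · intro i j hi1 hi2 hj1 hj2
        have := h1 (i - t) (j - t) (by omega) (by omega) (by omega) (by omega)
        dsimp only at this
        rwa [show t + (i - t) = i by omega, show t + (j - t) = j by omega] at this
      · intro i j hi1 hi2 hj1 hj2
        have := h2 (i - t) (j - t) (by omega) (by omega) (by omega) (by omega)
        dsimp only at this
        rwa [show t + (i - t) = i by omega, show t + (j - t) = j by omega] at this
      · have := Q_shift R t m bs (u + s) h3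
        rwa [show u + s + t = u + t + s by omega] at this

lemma abstract_blocks : ∀ (n : ℕ) (R : ℕ → ℕ → Prop),
    (∀ i i' j j', i' ≤ i → j ≤ j' → R i j → R i' j') →
    (∀ i j k, i < n → j < n → k < n → R i j → R j k → R i k) →
    (∀ i j k, i < n → j < n → k < n → R i k → R i j ∨ R j k) →
    ∃ bs : List (ℕ × Bool), (∀ b ∈ bs, 0 < b.1) ∧ sumB bs = n ∧ Q n R bs 0 := by
  intro n
  induction n using Nat.strong_induction_on with
  | _ n IH =>
    intro R hmono hT hC
    rcases Nat.eq_zero_or_pos n with rfl | hn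
    · exact ⟨[], by simp, by simp, trivial⟩
    classical
    -- `cut w`: everything with index `< w` completely precedes everything `≥ w`.
    set cut : ℕ → Prop := fun w => ∀ i j, i < w → w ≤ j → j < n → R i j ∧ ¬ R j i with hcut
    have hex : ∃ w, 0 < w ∧ cut w := ⟨n, hn, fun i j _ h2 h3 => absurd (lt_of_le_of_lt h2 h3) (lt_irrefl _)⟩
    set t := Nat.find hex with htdef
    obtain ⟨ht0, htcut⟩ := Nat.find_spec hex
    have htn : t ≤ n := Nat.find_min' hex ⟨hn, fun i j _ h2 h3 => absurd (lt_of_le_of_lt h2 h3) (lt_irrefl _)⟩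
    have htmin : ∀ w, 0 < w → w < t → ¬ cut w := fun w hw0 hwt hc =>
      Nat.find_min hex hwt ⟨hw0, hc⟩
    -- square constancy for boundaries inside the first block
    have hsq : ∀ w, 1 ≤ w → w < t →
        ((R (w-1) (w-1) ∧ R w w ∧ R (w-1) w ∧ R w (w-1)) ∨
         (¬ R (w-1) (w-1) ∧ ¬ R w w ∧ ¬ R (w-1) w ∧ ¬ R w (w-1))) := by
      intro w hw1 hwt
      have hnc := htmin w hw1 hwt
      have hne : ∃ i j, i < w ∧ w ≤ j ∧ j < n ∧ ¬(R i j ∧ ¬ R j i) := by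
        by_contra hno
        push_neg at hno
        exact hnc fun i j h1 h2 h3 => ⟨(hno i j h1 h2 h3).1, (hno i j h1 h2 h3).2⟩
      obtain ⟨i, j, hiw, hwj, hjn, hbad⟩ := hne
      by_cases hRij : R i j
      · -- then `R j i` holds
        have hRji : R j i := by tauto
        have h1 : R w (w - 1) := hmono j w i (w - 1) (by omega) (by omega) hRji
        exact Or.inl ⟨hmono w (w-1) (w-1) (w-1) (by omega) (by omega) h1,
          hmono w w (w-1) w (by omega) (by omega) h1,
          hmono w (w-1) (w-1) w (by omega) (by omega) h1, h1⟩
      · have h1 : ¬ R (w - 1) w := fun hc => hRij (hmono (w-1) i w j (by omega) (by omega) hc)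
        refine Or.inr ⟨fun hc => h1 (hmono (w-1) (w-1) (w-1) w le_rfl (by omega) hc),
          fun hc => h1 (hmono w (w-1) w w (by omega) le_rfl hc),
          h1, fun hc => h1 (hmono w (w-1) (w-1) w (by omega) (by omega) hc)⟩
    -- the diagonal is constant in the first block
    have hdiag : ∀ w, w < t → (R w w ↔ R 0 0) := by
      intro w
      induction w with
      | zero => exact fun _ => Iff.rfl
      | succ w ihw =>
          intro hwt
          have hs := hsq (w + 1) (by omega) hwt
          have hw := ihw (by omega)
          simp only [Nat.add_sub_cancel] at hs
          rcases hs with ⟨h1, h2, _, _⟩ | ⟨h1, h2, _, _⟩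
          · constructor
            · intro _; exact hw.1 h1
            · intro _; exact h2
          · constructor
            · intro hc; exact absurd hc h2
            · intro hc; exact absurd (hw.2 hc) h1
    -- the first block is constant
    have hconst : ∀ i j, i < t → j < t → (R i j ↔ R 0 0) := by
      by_cases hR0 : R 0 0
      · have haux : ∀ d i j, i < t → j < t → i = j + d → R i j := by
          intro d
          induction d with
          | zero =>
              intro i j hi hj he
              have : i = j := by omega
              subst this
              exact (hdiag i hi).2 hR0
          | succ d ihd =>
              intro i j hi hj he
              have h1 : R i (j + 1) := ihd i (j + 1) hi (by omega) (by omega)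
              have h2 : R (j + 1) j := by
                have hs := hsq (j + 1) (by omega) (by omega)
                simp only [Nat.add_sub_cancel] at hs
                rcases hs with h | h
                · exact h.2.2.2
                · exact absurd ((hdiag (j + 1) (by omega)).2 hR0) h.2.1
              exact hT i (j + 1) j (by omega) (by omega) (by omega) h1 h2
        intro i j hi hj
        refine iff_of_true ?_ hR0
        rcases le_or_gt i j with hij | hij
        · exact hmono i i i j le_rfl hij ((hdiag i hi).2 hR0)
        · exact haux (i - j) i j hi hj (by omega)
      · have haux : ∀ d i j, i < t → j < t → j = i + d → ¬ R i j := by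
          intro d
          induction d with
          | zero =>
              intro i j hi hj he
              have : i = j := by omega
              subst this
              exact fun hc => hR0 ((hdiag i hi).1 hc)
          | succ d ihd =>
              intro i j hi hj he hc
              have h2 : ¬ R (j - 1) j := by
                have hs := hsq j (by omega) hj
                rcases hs with h | h
                · exact absurd ((hdiag j hj).1 h.2.1) hR0
                · exact h.2.2.1
              rcases hC i (j - 1) j (by omega) (by omega) (by omega) hc with h | h
              · exact ihd i (j - 1) hi (by omega) (by omega) h
              · exact h2 h
        intro i j hi hj
        refine iff_of_false ?_ hR0
        rcases le_or_gt j i with hij | hij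
        · intro hc
          exact hR0 ((hdiag j hj).1 (hmono i j j j hij le_rfl hc))
        · exact haux (j - i) i j hi hj (by omega)
    -- recurse on the rest
    obtain ⟨bs', hpos', hsum', hQ'⟩ := IH (n - t) (by omega) (fun i j => R (t + i) (t + j))
      (fun i i' j j' h1 h2 h3 => hmono (t + i) (t + i') (t + j) (t + j') (by omega) (by omega) h3)
      (fun i j k hi hj hk h1 h2 => hT (t + i) (t + j) (t + k) (by omega) (by omega) (by omega) h1 h2)
      (fun i j k hi hj hk h1 => hC (t + i) (t + j) (t + k) (by omega) (by omega) (by omega) h1)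
    classical
    refine ⟨(t, if R 0 0 then false else true) :: bs', ?_, ?_, ?_, ?_, ?_⟩
    · intro b hb
      rcases List.mem_cons.1 hb with rfl | hb
      · exact ht0
      · exact hpos' b hb
    · rw [sumB_cons, hsum']; omega
    · intro i j hi1 hi2 hj1 hj2
      by_cases hR0 : R 0 0
      · rw [if_pos hR0]
        exact iff_of_true ((hconst i j (by omega) (by omega)).2 hR0) rfl
      · rw [if_neg hR0]
        refine iff_of_false (fun hc => hR0 ((hconst i j (by omega) (by omega)).1 hc)) (by simp)
    · intro i j hi1 hi2 hj1 hj2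
      exact htcut i j (by omega) (by omega) hj2
    · have h := Q_shift R t (n - t) bs' 0 hQ'
      rwa [show n - t + t = n by omega] at h

lemma mem_take_drop {l : List ℕ} {u t a : ℕ} (h : a ∈ (l.drop u).take t) :
    ∃ i, u ≤ i ∧ i < u + t ∧ ∃ hi : i < l.length, l[i] = a := by
  rw [List.mem_iff_getElem] at h
  obtain ⟨m, hm, he⟩ := h
  rw [List.length_take, List.length_drop] at hm
  have h1 : m < t := lt_of_lt_of_le hm (min_le_left _ _)
  have h2 : u + m < l.length := by
    have := lt_of_lt_of_le hm (min_le_right _ _)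
    omega
  refine ⟨u + m, by omega, by omega, h2, ?_⟩
  rw [← he, List.getElem_take, List.getElem_drop]

lemma mem_drop' {l : List ℕ} {v a : ℕ} (h : a ∈ l.drop v) :
    ∃ i, v ≤ i ∧ ∃ hi : i < l.length, l[i] = a := by
  rw [List.mem_iff_getElem] at h
  obtain ⟨m, hm, he⟩ := h
  rw [List.length_drop] at hm
  refine ⟨v + m, by omega, by omega, ?_⟩
  rw [← he, List.getElem_drop]

lemma mw_blocks {x y : List ℕ} {R : ℕ → ℕ → Prop} {n : ℕ}
    (hx : x.Pairwise (· < ·)) (hy : y.Pairwise (· < ·)) (hd : ∀ a ∈ x, a ∉ y)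
    (hlx : x.length = n) (hly : y.length = n)
    (hR : ∀ (i j : ℕ) (hi : i < x.length) (hj : j < y.length), (x[i] < y[j] ↔ R i j)) :
    ∀ (bs : List (ℕ × Bool)) (u : ℕ), Q n R bs u → u + sumB bs = n →
      mw (x.drop u) (y.drop u) = wordOfBlocks bs := by
  intro bs
  induction bs with
  | nil =>
      intro u _ hsum
      rw [sumB_nil] at hsum
      rw [List.drop_eq_nil_of_le (by omega), List.drop_eq_nil_of_le (by omega)]
      simp [wordOfBlocks]
  | cons hdp bs ih =>
      obtain ⟨t, b⟩ := hdp
      intro u hQ hsum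
      obtain ⟨hQ1, hQ2, hQ3⟩ := hQ
      rw [sumB_cons] at hsum
      have hut : u + t ≤ n := by omega
      have hx1 : x.drop u = (x.drop u).take t ++ x.drop (u + t) := by
        conv_lhs => rw [← List.take_append_drop t (x.drop u)]
        rw [List.drop_drop]
      have hy1 : y.drop u = (y.drop u).take t ++ y.drop (u + t) := by
        conv_lhs => rw [← List.take_append_drop t (y.drop u)]
        rw [List.drop_drop]
      have hsx := List.pairwise_iff_getElem.1 hx
      have hsy := List.pairwise_iff_getElem.1 hy
      have hless : ∀ a ∈ (x.drop u).take t ++ (y.drop u).take t,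
          ∀ c ∈ x.drop (u + t) ++ y.drop (u + t), a < c := by
        intro a ha c hc
        rw [List.mem_append] at ha hc
        rcases ha with ha | ha <;> rcases hc with hc | hc
        · obtain ⟨i, hi1, hi2, hix, rfl⟩ := mem_take_drop ha
          obtain ⟨j, hj1, hjx, rfl⟩ := mem_drop' hc
          exact hsx i j hix hjx (by omega)
        · obtain ⟨i, hi1, hi2, hix, rfl⟩ := mem_take_drop ha
          obtain ⟨j, hj1, hjy, rfl⟩ := mem_drop' hc
          exact (hR i j hix hjy).2 (hQ2 i j hi1 hi2 hj1 (by omega)).1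
        · obtain ⟨i, hi1, hi2, hiy, rfl⟩ := mem_take_drop ha
          obtain ⟨j, hj1, hjx, rfl⟩ := mem_drop' hc
          have hnot : ¬ x[j] < y[i] := fun hcon =>
            (hQ2 i j hi1 hi2 hj1 (by omega)).2 ((hR j i hjx hiy).1 hcon)
          have hne : x[j] ≠ y[i] := fun hcon => hd x[j] (List.getElem_mem _) (by rw [hcon]; exact List.getElem_mem _)
          omega
        · obtain ⟨i, hi1, hi2, hiy, rfl⟩ := mem_take_drop ha
          obtain ⟨j, hj1, hjy, rfl⟩ := mem_drop' hc
          exact hsy i j hiy hjy (by omega)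
      have hlenx1 : ((x.drop u).take t).length = t := by
        rw [List.length_take, List.length_drop, hlx]
        omega
      have hleny1 : ((y.drop u).take t).length = t := by
        rw [List.length_take, List.length_drop, hly]
        omega
      rw [hx1, hy1, mw_append _ _ _ _ hless]
      have hrest : mw (x.drop (u + t)) (y.drop (u + t)) = wordOfBlocks bs :=
        ih (u + t) hQ3 (by omega)
      have hwb : wordOfBlocks ((t, b) :: bs)
          = (List.replicate t b ++ List.replicate t (!b)) ++ wordOfBlocks bs := by
        simp [wordOfBlocks]
      rw [hwb, hrest]
      congr 1
      cases b
      · rw [mw_all_lt ?_]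
        · rw [hlenx1, hleny1]
          norm_num
        · intro a ha c hc
          obtain ⟨i, hi1, hi2, hix, rfl⟩ := mem_take_drop ha
          obtain ⟨j, hj1, hj2, hjy, rfl⟩ := mem_take_drop hc
          exact (hR i j hix hjy).2 ((hQ1 i j hi1 hi2 hj1 hj2).2 rfl)
      · rw [mw_all_gt ?_]
        · rw [hlenx1, hleny1]
          norm_num
        · intro c hc a ha
          obtain ⟨j, hj1, hj2, hjy, rfl⟩ := mem_take_drop hc
          obtain ⟨i, hi1, hi2, hix, rfl⟩ := mem_take_drop ha
          have hnot : ¬ x[i] < y[j] := fun hcon => by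
            have := (hQ1 i j hi1 hi2 hj1 hj2).1 ((hR i j hix hjy).1 hcon)
            simp at this
          have hne : x[i] ≠ y[j] := fun hcon => hd x[i] (List.getElem_mem _) (by rw [hcon]; exact List.getElem_mem _)
          omega

lemma headI_mem' {l : List ℕ} (h : l ≠ []) : l.headI ∈ l := by
  cases l with
  | nil => exact absurd rfl h
  | cons a as => exact List.mem_cons_self

lemma hbs_core {r : ℕ} {P : List Bool} (x y z : List ℕ)
    (hx : x.Pairwise (· < ·)) (hy : y.Pairwise (· < ·)) (hz : z.Pairwise (· < ·))
    (hlx : x.length = r) (hly : y.length = r) (hlz : z.length = r)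
    (hdxy : ∀ a ∈ x, a ∉ y) (hdxz : ∀ a ∈ x, a ∉ z) (hdyz : ∀ a ∈ y, a ∉ z)
    (hxy : mw x y = P) (hxz : mw x z = P) (hyz : mw y z = P) :
    HasBlockSplitting r P := by
  set R : ℕ → ℕ → Prop := fun i j => i < fb P j with hRdef
  have hRxy : ∀ (i j : ℕ) (hi : i < x.length) (hj : j < y.length), (x[i] < y[j] ↔ R i j) := by
    intro i j hi hj
    have hrr : R i j ↔ i < fb P j := Iff.rfl
    rw [hrr, ← hxy]
    exact mw_lt_iff x y hx hy hdxy i j hi hj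
  have hRxz : ∀ (i j : ℕ) (hi : i < x.length) (hj : j < z.length), (x[i] < z[j] ↔ R i j) := by
    intro i j hi hj
    have hrr : R i j ↔ i < fb P j := Iff.rfl
    rw [hrr, ← hxz]
    exact mw_lt_iff x z hx hz hdxz i j hi hj
  have hRyz : ∀ (i j : ℕ) (hi : i < y.length) (hj : j < z.length), (y[i] < z[j] ↔ R i j) := by
    intro i j hi hj
    have hrr : R i j ↔ i < fb P j := Iff.rfl
    rw [hrr, ← hyz]
    exact mw_lt_iff y z hy hz hdyz i j hi hj
  have hmono : ∀ i i' j j', i' ≤ i → j ≤ j' → R i j → R i' j' := by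
    intro i i' j j' h1 h2 h3
    exact lt_of_le_of_lt h1 (lt_of_lt_of_le h3 (fb_mono P h2))
  have hT : ∀ i j k, i < r → j < r → k < r → R i j → R j k → R i k := by
    intro i j k hi hj hk h1 h2
    exact (hRxz i k (by omega) (by omega)).1
      (lt_trans ((hRxy i j (by omega) (by omega)).2 h1) ((hRyz j k (by omega) (by omega)).2 h2))
  have hC : ∀ i j k, i < r → j < r → k < r → R i k → R i j ∨ R j k := by
    intro i j k hi hj hk h1
    by_cases hc : x[i]'(by omega) < y[j]'(by omega)
    · exact Or.inl ((hRxy i j (by omega) (by omega)).1 hc)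
    · right
      have hne : y[j]'(by omega) ≠ x[i]'(by omega) := fun hcon =>
        hdxy (x[i]'(by omega)) (List.getElem_mem _) (by rw [← hcon]; exact List.getElem_mem _)
      have h2 : y[j]'(by omega) < x[i]'(by omega) := by omega
      exact (hRyz j k (by omega) (by omega)).1
        (lt_trans h2 ((hRxz i k (by omega) (by omega)).2 h1))
  obtain ⟨bs, hpos, hsum, hQ⟩ := abstract_blocks r R hmono hT hC
  have hblk := mw_blocks hx hy hdxy hlx hly hRxy bs 0 hQ (by omega)
  rw [List.drop_zero, List.drop_zero, hxy] at hblk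
  exact ⟨bs, hpos, by simpa [sumB] using hsum, hblk⟩

lemma mw_head_lt : ∀ {x y : List ℕ}, x ≠ [] → y ≠ [] →
    (mw x y).head? = some false → x.headI < y.headI
  | x0 :: xs, y0 :: ys, _, _, h => by
      rw [mw_cons_cons] at h
      split at h
      · simpa using ‹x0 < y0›
      · simp at h

theorem hbs_of_collectable {r : ℕ} {P : List Bool} (hr : 2 ≤ r) (hP : IsPattern r P)
    (hC : Collectable r P) : HasBlockSplitting r P := by
  obtain ⟨hlen, hcnt, hhead⟩ := hP
  obtain ⟨M, hcard, hcards, hdisj, hform⟩ := hC 3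
  rw [Finset.card_eq_three] at hcard
  obtain ⟨e1, e2, e3, h12, h13, h23, rfl⟩ := hcard
  have hmem1 : e1 ∈ ({e1, e2, e3} : Finset (Finset ℕ)) := by simp
  have hmem2 : e2 ∈ ({e1, e2, e3} : Finset (Finset ℕ)) := by simp
  have hmem3 : e3 ∈ ({e1, e2, e3} : Finset (Finset ℕ)) := by simp
  have hne : ∀ e ∈ ({e1, e2, e3} : Finset (Finset ℕ)), (e.sort (· ≤ ·)) ≠ [] := by
    intro e he hc
    have := Finset.length_sort (α := ℕ) (· ≤ ·) (s := e)
    rw [hc, hcards e he] at this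
    simp at this
    omega
  have hdisj' : ∀ u ∈ ({e1, e2, e3} : Finset (Finset ℕ)),
      ∀ v ∈ ({e1, e2, e3} : Finset (Finset ℕ)), u ≠ v →
      ∀ a ∈ u.sort (· ≤ ·), a ∉ v.sort (· ≤ ·) := by
    intro u hu v hv huv a ha hav
    exact Finset.disjoint_left.1 (hdisj u hu v hv huv) ((Finset.mem_sort _).1 ha)
      ((Finset.mem_sort _).1 hav)
  have horient : ∀ u ∈ ({e1, e2, e3} : Finset (Finset ℕ)),
      ∀ v ∈ ({e1, e2, e3} : Finset (Finset ℕ)), u ≠ v →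
      (u.sort (· ≤ ·)).headI < (v.sort (· ≤ ·)).headI →
      mw (u.sort (· ≤ ·)) (v.sort (· ≤ ·)) = P := by
    intro u hu v hv huv hlt
    rcases hform u hu v hv huv with h | h
    · rwa [pairWord_eq_mw_sort (hdisj u hu v hv huv)] at h
    · exfalso
      rw [pairWord_eq_mw_sort (hdisj v hv u hu huv.symm)] at h
      have := mw_head_lt (hne v hv) (hne u hu) (by rw [h, hhead])
      omega
  have hheadmem : ∀ u ∈ ({e1, e2, e3} : Finset (Finset ℕ)), (u.sort (· ≤ ·)).headI ∈ u := by
    intro u hu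
    have h1 : (u.sort (· ≤ ·)).headI ∈ u.sort (· ≤ ·) := headI_mem' (hne u hu)
    exact (Finset.mem_sort _).1 h1
  have hhne : ∀ u ∈ ({e1, e2, e3} : Finset (Finset ℕ)),
      ∀ v ∈ ({e1, e2, e3} : Finset (Finset ℕ)), u ≠ v →
      (u.sort (· ≤ ·)).headI ≠ (v.sort (· ≤ ·)).headI := by
    intro u hu v hv huv hc
    exact Finset.disjoint_left.1 (hdisj u hu v hv huv) (hheadmem u hu)
      (hc ▸ hheadmem v hv)
  have main : ∀ u ∈ ({e1, e2, e3} : Finset (Finset ℕ)),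
      ∀ v ∈ ({e1, e2, e3} : Finset (Finset ℕ)),
      ∀ w ∈ ({e1, e2, e3} : Finset (Finset ℕ)), u ≠ v → u ≠ w → v ≠ w →
      (u.sort (· ≤ ·)).headI < (v.sort (· ≤ ·)).headI →
      (v.sort (· ≤ ·)).headI < (w.sort (· ≤ ·)).headI → HasBlockSplitting r P := by
    intro u hu v hv w hw huv huw hvw h1 h2
    refine hbs_core (u.sort (· ≤ ·)) (v.sort (· ≤ ·)) (w.sort (· ≤ ·))
      ((Finset.sortedLT_sort u).pairwise) ((Finset.sortedLT_sort v).pairwise) ((Finset.sortedLT_sort w).pairwise)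
      (by rw [Finset.length_sort, hcards u hu]) (by rw [Finset.length_sort, hcards v hv])
      (by rw [Finset.length_sort, hcards w hw])
      (hdisj' u hu v hv huv) (hdisj' u hu w hw huw) (hdisj' v hv w hw hvw)
      (horient u hu v hv huv h1) (horient u hu w hw huw (lt_trans h1 h2))
      (horient v hv w hw hvw h2)
  have d12 := hhne e1 hmem1 e2 hmem2 h12
  have d13 := hhne e1 hmem1 e3 hmem3 h13
  have d23 := hhne e2 hmem2 e3 hmem3 h23
  rcases lt_trichotomy (e1.sort (· ≤ ·)).headI (e2.sort (· ≤ ·)).headI with a12 | a12 | a12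
  · rcases lt_trichotomy (e2.sort (· ≤ ·)).headI (e3.sort (· ≤ ·)).headI with a23 | a23 | a23
    · exact main e1 hmem1 e2 hmem2 e3 hmem3 h12 h13 h23 a12 a23
    · exact absurd a23 d23
    · rcases lt_trichotomy (e1.sort (· ≤ ·)).headI (e3.sort (· ≤ ·)).headI with a13 | a13 | a13
      · exact main e1 hmem1 e3 hmem3 e2 hmem2 h13 h12 (Ne.symm h23) a13 a23
      · exact absurd a13 d13
      · exact main e3 hmem3 e1 hmem1 e2 hmem2 (Ne.symm h13) (Ne.symm h23) h12 a13 a12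
  · exact absurd a12 d12
  · rcases lt_trichotomy (e1.sort (· ≤ ·)).headI (e3.sort (· ≤ ·)).headI with a13 | a13 | a13
    · exact main e2 hmem2 e1 hmem1 e3 hmem3 (Ne.symm h12) h23 h13 a12 a13
    · exact absurd a13 d13
    · rcases lt_trichotomy (e2.sort (· ≤ ·)).headI (e3.sort (· ≤ ·)).headI with a23 | a23 | a23
      · exact main e2 hmem2 e3 hmem3 e1 hmem1 h23 (Ne.symm h12) (Ne.symm h13) a23 a13
      · exact absurd a23 d23
      · exact main e3 hmem3 e2 hmem2 e1 hmem1 (Ne.symm h23) (Ne.symm h13) (Ne.symm h12) a23 a12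

/-! ### Counting collectable patterns -/

/-- The basic building block `X^t Y^t ++ w`. -/
def GB (t : ℕ) (b : Bool) (w : List Bool) : List Bool :=
  (List.replicate t b ++ List.replicate t (!b)) ++ w

/-- All words that are concatenations of blocks with total size `n`. -/
def allB : ℕ → List (List Bool)
  | 0 => [[]]
  | n + 1 =>
      (List.range (n + 1)).attach.flatMap fun m =>
        [false, true].flatMap fun b =>
          (allB m.1).map fun w => GB (n + 1 - m.1) b w
decreasing_by exact List.mem_range.1 m.2

/-- All words that are concatenations of blocks with total size `n`, first block of
type `A^t B^t`. -/
def allA : ℕ → List (List Bool)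
  | 0 => [[]]
  | n + 1 =>
      (List.range (n + 1)).flatMap fun m =>
        (allB m).map fun w => GB (n + 1 - m) false w

lemma wordOfBlocks_cons (t : ℕ) (b : Bool) (bs : List (ℕ × Bool)) :
    wordOfBlocks ((t, b) :: bs) = GB t b (wordOfBlocks bs) := by
  simp [wordOfBlocks, GB]

lemma wordOfBlocks_mem_allB : ∀ bs : List (ℕ × Bool), (∀ b ∈ bs, 0 < b.1) →
    wordOfBlocks bs ∈ allB (sumB bs)
  | [], _ => by simp [allB, wordOfBlocks]
  | (t, b) :: bs, hpos => by
      have ht : 0 < t := hpos (t, b) (List.mem_cons_self)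
      have hn : ∃ n, t + sumB bs = n + 1 := ⟨t + sumB bs - 1, by omega⟩
      obtain ⟨n, hn⟩ := hn
      rw [sumB_cons, hn, allB, List.mem_flatMap]
      refine ⟨⟨sumB bs, List.mem_range.2 (by omega)⟩, List.mem_attach _ _, ?_⟩
      rw [List.mem_flatMap]
      refine ⟨b, by cases b <;> simp, ?_⟩
      rw [List.mem_map]
      exact ⟨wordOfBlocks bs, wordOfBlocks_mem_allB bs
        (fun c hc => hpos c (List.mem_cons_of_mem _ hc)),
        by rw [wordOfBlocks_cons, show n + 1 - sumB bs = t by omega]⟩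

lemma exists_of_mem_allB : ∀ (n : ℕ) (w : List Bool), w ∈ allB n →
    ∃ bs : List (ℕ × Bool), (∀ b ∈ bs, 0 < b.1) ∧ sumB bs = n ∧ w = wordOfBlocks bs := by
  intro n
  induction n using Nat.strong_induction_on with
  | _ n IH =>
    match n with
    | 0 =>
        intro w hw
        simp only [allB, List.mem_singleton] at hw
        exact ⟨[], by simp, by simp, by simp [hw, wordOfBlocks]⟩
    | n + 1 =>
        intro w hw
        rw [allB, List.mem_flatMap] at hw
        obtain ⟨⟨m, hm⟩, _, hw⟩ := hw
        rw [List.mem_flatMap] at hw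
        obtain ⟨b, _, hw⟩ := hw
        rw [List.mem_map] at hw
        obtain ⟨w', hw', rfl⟩ := hw
        have hmn : m < n + 1 := List.mem_range.1 hm
        obtain ⟨bs', hpos', hsum', rfl⟩ := IH m hmn w' hw'
        refine ⟨(n + 1 - m, b) :: bs', ?_, ?_, ?_⟩
        · intro c hc
          rcases List.mem_cons.1 hc with rfl | hc
          · simp; omega
          · exact hpos' c hc
        · rw [sumB_cons]; omega
        · rw [wordOfBlocks_cons]

lemma length_wordOfBlocks : ∀ bs : List (ℕ × Bool),
    (wordOfBlocks bs).length = 2 * sumB bs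
  | [] => by simp [wordOfBlocks]
  | (t, b) :: bs => by
      rw [wordOfBlocks_cons, GB, sumB_cons]
      simp [length_wordOfBlocks bs]
      omega

lemma count_wordOfBlocks : ∀ bs : List (ℕ × Bool),
    (wordOfBlocks bs).count true = sumB bs
  | [] => by simp [wordOfBlocks]
  | (t, b) :: bs => by
      rw [wordOfBlocks_cons, GB, sumB_cons, List.count_append, List.count_append,
        count_wordOfBlocks bs]
      cases b <;> simp [List.count_replicate]

lemma GB_head {t : ℕ} (ht : 0 < t) (b : Bool) (w : List Bool) :
    (GB t b w).head? = some b := by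
  obtain ⟨s, rfl⟩ : ∃ s, t = s + 1 := ⟨t - 1, by omega⟩
  rw [GB, List.replicate_succ]
  rfl

lemma GB_length (t : ℕ) (b : Bool) (w : List Bool) :
    (GB t b w).length = 2 * t + w.length := by
  simp [GB]; omega

lemma GB_getElem_t {t : ℕ} (ht : 0 < t) (b : Bool) (w : List Bool) :
    (GB t b w)[t]'(by rw [GB_length]; omega) = !b := by
  have hl : GB t b w = List.replicate t b ++ (List.replicate t (!b) ++ w) := by
    simp [GB]
  rw [List.getElem_of_eq hl, List.getElem_append_right (by rw [List.length_replicate]),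
    List.getElem_append_left (by simp; omega), List.getElem_replicate]

lemma GB_inj_aux {t t' : ℕ} {b b' : Bool} {w w' : List Bool} (ht : 0 < t)
    (h : GB t b w = GB t' b' w') (hlt : t < t') : False := by
  have hb : b = b' := by
    have := GB_head ht b w
    rw [h, GB_head (by omega) b' w'] at this
    exact (Option.some_inj.1 this).symm
  have h1 : (GB t b w)[t]'(by rw [GB_length]; omega) = !b := GB_getElem_t ht b w
  have h2 : (GB t' b' w')[t]'(by rw [GB_length]; omega) = b' := by
    simp only [GB]
    rw [List.getElem_append_left (by rw [List.length_append, List.length_replicate, List.length_replicate]; omega),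
      List.getElem_append_left (by rw [List.length_replicate]; omega), List.getElem_replicate]
  have he : (GB t b w)[t]'(by rw [GB_length]; omega)
      = (GB t' b' w')[t]'(by rw [GB_length]; omega) := List.getElem_of_eq h _
  rw [h1, h2] at he
  rw [hb] at he
  exact Bool.not_ne_self b' he

lemma GB_inj {t t' : ℕ} {b b' : Bool} {w w' : List Bool} (ht : 0 < t) (ht' : 0 < t')
    (h : GB t b w = GB t' b' w') : t = t' ∧ b = b' ∧ w = w' := by
  have htt : t = t' := by
    rcases lt_trichotomy t t' with hc | hc | hc
    · exact absurd (GB_inj_aux ht h hc) not_false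
    · exact hc
    · exact absurd (GB_inj_aux ht' h.symm hc) not_false
  subst htt
  have hb : b = b' := by
    have := GB_head ht b w
    rw [h, GB_head ht b' w'] at this
    exact (Option.some_inj.1 this).symm
  subst hb
  exact ⟨rfl, rfl, List.append_cancel_left h⟩

lemma nodup_flatMap {α β : Type*} {l : List α} {f : α → List β}
    (hl : l.Nodup) (h1 : ∀ a ∈ l, (f a).Nodup)
    (h2 : ∀ a ∈ l, ∀ b ∈ l, a ≠ b → ∀ x ∈ f a, x ∉ f b) : (l.flatMap f).Nodup := by
  induction l with
  | nil => simp
  | cons a l ih =>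
      rw [List.flatMap_cons]
      rw [List.nodup_cons] at hl
      refine List.Nodup.append (h1 a (List.mem_cons_self))
        (ih hl.2 (fun c hc => h1 c (List.mem_cons_of_mem _ hc))
          (fun c hc d hd => h2 c (List.mem_cons_of_mem _ hc) d (List.mem_cons_of_mem _ hd)))
        ?_
      intro x hx hx'
      rw [List.mem_flatMap] at hx'
      obtain ⟨c, hc, hxc⟩ := hx'
      exact h2 a (List.mem_cons_self) c (List.mem_cons_of_mem _ hc)
        (fun he => hl.1 (he ▸ hc)) x hx hxc

lemma nodup_allB : ∀ n : ℕ, (allB n).Nodup := by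
  intro n
  induction n using Nat.strong_induction_on with
  | _ n IH =>
    match n with
    | 0 => simp [allB]
    | n + 1 =>
        rw [allB]
        refine nodup_flatMap (List.nodup_attach.2 (List.nodup_range)) ?_ ?_
        · rintro ⟨m, hm⟩ _
          have hmn : m < n + 1 := List.mem_range.1 hm
          have ht : 0 < n + 1 - m := by omega
          refine nodup_flatMap (by simp) ?_ ?_
          · intro b _
            exact List.Nodup.map
              (fun w w' hww => (GB_inj ht ht hww).2.2) (IH m hmn)
          · intro b hb b' hb' hbb x hx hx'
            rw [List.mem_map] at hx hx'
            obtain ⟨w, _, rfl⟩ := hx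
            obtain ⟨w', _, he⟩ := hx'
            exact hbb ((GB_inj ht ht he.symm).2.1)
        · rintro ⟨m, hm⟩ _ ⟨m', hm'⟩ _ hne x hx hx'
          have hmn : m < n + 1 := List.mem_range.1 hm
          have hmn' : m' < n + 1 := List.mem_range.1 hm'
          have hne' : m ≠ m' := fun he => hne (by simp [he])
          dsimp only at hx hx'
          rw [List.mem_flatMap] at hx hx'
          obtain ⟨b, _, hx⟩ := hx
          obtain ⟨b', _, hx'⟩ := hx'
          rw [List.mem_map] at hx hx'
          obtain ⟨w, _, rfl⟩ := hx
          obtain ⟨w', _, he⟩ := hx'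
          have := (GB_inj (by omega) (by omega) he.symm).1
          omega

lemma nodup_allA : ∀ n : ℕ, (allA n).Nodup := by
  intro n
  match n with
  | 0 => simp [allA]
  | n + 1 =>
      rw [allA]
      refine nodup_flatMap (List.nodup_range) ?_ ?_
      · intro m hm
        have hmn : m < n + 1 := List.mem_range.1 hm
        exact List.Nodup.map (fun w w' hww => (GB_inj (by omega) (by omega) hww).2.2)
          (nodup_allB m)
      · intro m hm m' hm' hne x hx hx'
        have hmn : m < n + 1 := List.mem_range.1 hm
        have hmn' : m' < n + 1 := List.mem_range.1 hm'
        rw [List.mem_map] at hx hx'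
        obtain ⟨w, _, rfl⟩ := hx
        obtain ⟨w', _, he⟩ := hx'
        have := (GB_inj (by omega) (by omega) he.symm).1
        omega

lemma length_allB_aux : ∀ n : ℕ,
    ((List.range n).map fun m => (allB m).length).sum = (if n = 0 then 0 else 3 ^ (n - 1)) ∧
    (allB n).length = (if n = 0 then 1 else 2 * 3 ^ (n - 1)) := by
  intro n
  induction n with
  | zero => simp [allB]
  | succ n ih =>
      have hsum : ((List.range (n + 1)).map fun m => (allB m).length).sum = 3 ^ n := by
        rw [List.range_succ, List.map_append, List.sum_append]
        rcases Nat.eq_zero_or_pos n with rfl | hn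
        · simp [allB]
        · rw [ih.1, if_neg (by omega)]
          simp only [List.map_cons, List.map_nil, List.sum_cons, List.sum_nil]
          rw [ih.2, if_neg (by omega)]
          have h3 : 3 ^ (n - 1) + 2 * 3 ^ (n - 1) = 3 ^ n := by
            have : 3 * 3 ^ (n - 1) = 3 ^ n := by
              rw [← pow_succ']
              congr 1
              omega
            omega
          omega
      refine ⟨by rw [hsum]; simp, ?_⟩
      rw [if_neg (by omega)]
      rw [allB, List.length_flatMap]
      have hmap : (List.map (List.length ∘ fun m : {x // x ∈ List.range (n+1)} =>
          [false, true].flatMap fun b => (allB m.1).map fun w => GB (n + 1 - m.1) b w)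
          (List.range (n + 1)).attach).sum
          = ((List.range (n + 1)).map fun m => 2 * (allB m).length).sum := by
        rw [← List.attach_map_val (l := List.range (n + 1))
          (f := fun m => 2 * (allB m).length)]
        congr 1
        apply List.map_congr_left
        rintro ⟨m, hm⟩ _
        simp [List.length_flatMap]
        omega
      simp only [Function.comp_def] at hmap
      rw [hmap]
      have h2 : ((List.range (n + 1)).map fun m => 2 * (allB m).length).sum
          = 2 * ((List.range (n + 1)).map fun m => (allB m).length).sum := by
        rw [← List.sum_map_mul_left]
      rw [h2, hsum, Nat.add_sub_cancel]

lemma length_allA {n : ℕ} (hn : 0 < n) : (allA n).length = 3 ^ (n - 1) := by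
  obtain ⟨m, rfl⟩ : ∃ m, n = m + 1 := ⟨n - 1, by omega⟩
  rw [allA, List.length_flatMap]
  have hmap : (List.map (List.length ∘ fun m' =>
      (allB m').map fun w => GB (m + 1 - m') false w) (List.range (m + 1))).sum
      = ((List.range (m + 1)).map fun m' => (allB m').length).sum := by
    congr 1
    apply List.map_congr_left
    intro m' _
    simp
  simp only [Function.comp_def] at hmap
  rw [hmap, (length_allB_aux (m + 1)).1, if_neg (by omega)]

lemma allA_spec {r : ℕ} (hr : 0 < r) (w : List Bool) :
    w ∈ allA r ↔ IsPattern r w ∧ HasBlockSplitting r w := by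
  obtain ⟨n, rfl⟩ : ∃ n, r = n + 1 := ⟨r - 1, by omega⟩
  constructor
  · intro hw
    rw [allA, List.mem_flatMap] at hw
    obtain ⟨m, hm, hw⟩ := hw
    rw [List.mem_map] at hw
    obtain ⟨w', hw', rfl⟩ := hw
    have hmn : m < n + 1 := List.mem_range.1 hm
    obtain ⟨bs', hpos', hsum', rfl⟩ := exists_of_mem_allB m w' hw'
    have hkey : GB (n + 1 - m) false (wordOfBlocks bs')
        = wordOfBlocks ((n + 1 - m, false) :: bs') := (wordOfBlocks_cons _ _ _).symm
    have hposall : ∀ c ∈ (n + 1 - m, false) :: bs', 0 < c.1 := by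
      intro c hc
      rcases List.mem_cons.1 hc with rfl | hc
      · simp; omega
      · exact hpos' c hc
    refine ⟨⟨?_, ?_, ?_⟩, ⟨(n + 1 - m, false) :: bs', hposall, ?_, hkey⟩⟩
    · rw [hkey, length_wordOfBlocks, sumB_cons]
      omega
    · rw [hkey, count_wordOfBlocks, sumB_cons]
      omega
    · rw [GB_head (by omega) false (wordOfBlocks bs')]
    · have : sumB ((n + 1 - m, false) :: bs') = n + 1 := by
        rw [sumB_cons]; omega
      simpa [sumB] using this
  · rintro ⟨⟨hlen, hcnt, hhead⟩, bs, hpos, hsum, rfl⟩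
    match bs, hpos, hsum with
    | [], _, hsum =>
        exfalso
        simp [wordOfBlocks] at hlen
    | (t, b) :: bs', hpos, hsum =>
        have ht : 0 < t := hpos _ (List.mem_cons_self)
        have hb : b = false := by
          have h1 := GB_head ht b (wordOfBlocks bs')
          rw [← wordOfBlocks_cons] at h1
          rw [h1] at hhead
          exact Option.some_inj.1 hhead
        subst hb
        have hsum' : t + sumB bs' = n + 1 := by
          have : sumB ((t, false) :: bs') = n + 1 := by simpa [sumB] using hsum
          rwa [sumB_cons] at this
        rw [allA, List.mem_flatMap]
        refine ⟨sumB bs', List.mem_range.2 (by omega), ?_⟩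
        rw [List.mem_map]
        exact ⟨wordOfBlocks bs', wordOfBlocks_mem_allB bs'
          (fun c hc => hpos c (List.mem_cons_of_mem _ hc)),
          by rw [wordOfBlocks_cons, show n + 1 - sumB bs' = t by omega]⟩

/-- For `r ≥ 2`, an `r`-pattern is collectable iff it is a concatenation of blocks
`A^t B^t` or `B^t A^t`; consequently there are exactly `3^(r−1)` collectable
`r`-patterns. -/
theorem collectable_characterization (r : ℕ) (hr : 2 ≤ r) :
    (∀ P : List Bool, IsPattern r P → (Collectable r P ↔ HasBlockSplitting r P)) ∧
    Nat.card {P : List Bool // IsPattern r P ∧ Collectable r P} = 3 ^ (r - 1) := by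
  have hiff : ∀ P : List Bool, IsPattern r P → (Collectable r P ↔ HasBlockSplitting r P) :=
    fun P hP => ⟨fun hc => hbs_of_collectable hr hP hc,
      fun hb => collectable_of_hbs (by omega) hb⟩
  refine ⟨hiff, ?_⟩
  have hequiv : ∀ P : List Bool, (IsPattern r P ∧ Collectable r P) ↔ P ∈ (allA r).toFinset := by
    intro P
    rw [List.mem_toFinset, allA_spec (by omega)]
    constructor
    · rintro ⟨h1, h2⟩
      exact ⟨h1, (hiff P h1).1 h2⟩
    · rintro ⟨h1, h2⟩
      exact ⟨h1, (hiff P h1).2 h2⟩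
  rw [Nat.card_congr (Equiv.subtypeEquivRight hequiv), Nat.card_eq_finsetCard,
    List.toFinset_card_of_nodup (nodup_allA r), length_allA (by omega)]
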